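/- Let n ≥ 1, let u, v : Fin n → ℂ be unit vectors (∑ i, |u i|² = 1 and ∑ i, |v i|² = 1), and let θ ∈ ℝ. For each i define the quaternion q i ∈ ℍ whose four real components are (√2 cos θ · Re(u i), √2 cos θ · Im(u i), √2 sin θ · Re(v i), √2 sin θ · Im(v i)), i.e. q i = √2 (cos θ · u i + sin θ · (v i)𝐣). Then ‖∑ i, Hopf(q i)‖² = 4 cos²(2θ) + 4 sin²(2θ) · |∑ i, conj(u i) · v i|², i.e. the squared failure-to-close of the polygonal arm with edges Hopf(q i) equals 4cos²2θ + 4sin²2θ·|⟨u,v⟩|². -/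

import Mathlib

open scoped Quaternion
open Real

/-- The quaternion unit 𝐢. -/
noncomputable def qI : ℍ[ℝ] := ⟨0, 1, 0, 0⟩

/-- The Hopf map `q ↦ q̄ · 𝐢 · q`. -/
noncomputable def Hopf (q : ℍ[ℝ]) : ℍ[ℝ] := star q * qI * q

/-- The quaternion `√2 (cos θ · u + sin θ · v·𝐣)` for complex numbers `u`, `v`. -/
noncomputable def joinCoord (θ : ℝ) (u v : ℂ) : ℍ[ℝ] :=
  ⟨Real.sqrt 2 * Real.cos θ * u.re, Real.sqrt 2 * Real.cos θ * u.im,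
   Real.sqrt 2 * Real.sin θ * v.re, Real.sqrt 2 * Real.sin θ * v.im⟩

lemma hopf_join (θ : ℝ) (a b : ℂ) :
    Hopf (joinCoord θ a b) =
      ⟨0,
       2 * Real.cos θ ^ 2 * (a.re ^ 2 + a.im ^ 2) - 2 * Real.sin θ ^ 2 * (b.re ^ 2 + b.im ^ 2),
       -(4 * Real.cos θ * Real.sin θ) * (a.re * b.im - a.im * b.re),
       (4 * Real.cos θ * Real.sin θ) * (a.re * b.re + a.im * b.im)⟩ := by
  have h2 : Real.sqrt 2 * Real.sqrt 2 = 2 := Real.mul_self_sqrt (by norm_num)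
  ext <;>
    simp only [Hopf, Quaternion.re_mul, Quaternion.imI_mul, Quaternion.imJ_mul,
      Quaternion.imK_mul, Quaternion.re_star, Quaternion.imI_star, Quaternion.imJ_star,
      Quaternion.imK_star] <;> simp only [joinCoord, qI]
  · ring
  · linear_combination (Real.cos θ ^ 2 * (a.re ^ 2 + a.im ^ 2)
      - Real.sin θ ^ 2 * (b.re ^ 2 + b.im ^ 2)) * h2
  · linear_combination (2 * Real.cos θ * Real.sin θ * (a.im * b.re - a.re * b.im)) * h2
  · linear_combination (2 * Real.cos θ * Real.sin θ * (a.re * b.re + a.im * b.im)) * h2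

lemma sum_re {ι : Type*} (s : Finset ι) (f : ι → ℍ[ℝ]) :
    (∑ i ∈ s, f i).re = ∑ i ∈ s, (f i).re :=
  map_sum (QuaternionAlgebra.reₗ (-1 : ℝ) 0 (-1) : ℍ[ℝ] →ₗ[ℝ] ℝ) f s

lemma sum_imI {ι : Type*} (s : Finset ι) (f : ι → ℍ[ℝ]) :
    (∑ i ∈ s, f i).imI = ∑ i ∈ s, (f i).imI :=
  map_sum (QuaternionAlgebra.imIₗ (-1 : ℝ) 0 (-1) : ℍ[ℝ] →ₗ[ℝ] ℝ) f s

lemma sum_imJ {ι : Type*} (s : Finset ι) (f : ι → ℍ[ℝ]) :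
    (∑ i ∈ s, f i).imJ = ∑ i ∈ s, (f i).imJ :=
  map_sum (QuaternionAlgebra.imJₗ (-1 : ℝ) 0 (-1) : ℍ[ℝ] →ₗ[ℝ] ℝ) f s

lemma sum_imK {ι : Type*} (s : Finset ι) (f : ι → ℍ[ℝ]) :
    (∑ i ∈ s, f i).imK = ∑ i ∈ s, (f i).imK :=
  map_sum (QuaternionAlgebra.imKₗ (-1 : ℝ) 0 (-1) : ℍ[ℝ] →ₗ[ℝ] ℝ) f s

/-- The squared failure-to-close of the polygonal arm with edges `Hopf(q i)`, where
`q i = √2 (cos θ · u i + sin θ · (v i)𝐣)`, equals `4cos²2θ + 4sin²2θ·|⟨u,v⟩|²`. -/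
theorem squared_failure_to_close (n : ℕ) (hn : 1 ≤ n) (u v : Fin n → ℂ)
    (hu : ∑ i, ‖u i‖ ^ 2 = 1) (hv : ∑ i, ‖v i‖ ^ 2 = 1) (θ : ℝ) :
    ‖∑ i, Hopf (joinCoord θ (u i) (v i))‖ ^ 2
      = 4 * Real.cos (2 * θ) ^ 2
        + 4 * Real.sin (2 * θ) ^ 2 * ‖∑ i, (starRingEnd ℂ) (u i) * v i‖ ^ 2 := by
  set z : ℂ := ∑ i, (starRingEnd ℂ) (u i) * v i with hz
  have hu' : ∑ i, ((u i).re ^ 2 + (u i).im ^ 2) = 1 := by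
    rw [← hu]
    exact Finset.sum_congr rfl fun i _ => by
      rw [Complex.sq_norm, Complex.normSq_apply]; ring
  have hv' : ∑ i, ((v i).re ^ 2 + (v i).im ^ 2) = 1 := by
    rw [← hv]
    exact Finset.sum_congr rfl fun i _ => by
      rw [Complex.sq_norm, Complex.normSq_apply]; ring
  have hzre : z.re = ∑ i, ((u i).re * (v i).re + (u i).im * (v i).im) := by
    rw [hz, Complex.re_sum]
    exact Finset.sum_congr rfl fun i _ => by simp [Complex.mul_re]
  have hzim : z.im = ∑ i, ((u i).re * (v i).im - (u i).im * (v i).re) := by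
    rw [hz, Complex.im_sum]
    refine Finset.sum_congr rfl fun i _ => by simp [Complex.mul_im]; ring
  set Q : ℍ[ℝ] := ∑ i, Hopf (joinCoord θ (u i) (v i)) with hQ
  have hre : Q.re = 0 := by
    rw [hQ, sum_re]; simp [hopf_join]
  have himI : Q.imI = 2 * Real.cos (2 * θ) := by
    rw [hQ, sum_imI]
    simp only [hopf_join]
    rw [Finset.sum_sub_distrib, ← Finset.mul_sum, ← Finset.mul_sum, hu', hv',
      Real.cos_two_mul']
    ring
  have himJ : Q.imJ = -(2 * Real.sin (2 * θ)) * z.im := by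
    rw [hQ, sum_imJ]
    simp only [hopf_join]
    rw [← Finset.mul_sum, hzim, Real.sin_two_mul]
    ring
  have himK : Q.imK = 2 * Real.sin (2 * θ) * z.re := by
    rw [hQ, sum_imK]
    simp only [hopf_join]
    rw [← Finset.mul_sum, hzre, Real.sin_two_mul]
    ring
  have hn2 : ‖Q‖ ^ 2 = Q.re ^ 2 + Q.imI ^ 2 + Q.imJ ^ 2 + Q.imK ^ 2 := by
    rw [sq, ← Quaternion.normSq_eq_norm_mul_self, Quaternion.normSq_def']
  rw [hn2, hre, himI, himJ, himK, Complex.sq_norm, Complex.normSq_apply]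
  ring
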